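/- Let P(x,t) = t^d + a₁(x) t^{d-1} + ⋯ + a_d(x) with a_j ∈ ℂ[x₁,…,x_k] and d ≥ 1, and let δ(P) = max_j deg(a_j)/j. If s ≥ 0 is a real number such that for some constant C > 0 every zero (x,t) of P satisfies |t| ≤ C(1+|x|)^s, then s ≥ δ(P). -/

import Mathlib

open Polynomial Filter

private lemma evalAeval' {k : ℕ} (p : MvPolynomial (Fin k) ℂ) (v : Fin k → ℂ) (z : ℂ) :
    (MvPolynomial.aeval (fun j => Polynomial.C (v j) * Polynomial.X) p).eval z
      = MvPolynomial.eval (fun j => z * v j) p := by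
  rw [show (Polynomial.eval z : Polynomial ℂ → ℂ)
      = (Polynomial.aeval z : Polynomial ℂ →ₐ[ℂ] ℂ) from rfl]
  rw [MvPolynomial.comp_aeval_apply]
  have h : (fun i => (Polynomial.aeval z) (Polynomial.C (v i) * Polynomial.X))
      = fun j => z * v j := by
    funext j
    simp only [map_mul, Polynomial.aeval_C, Polynomial.aeval_X, mul_comm]
    simp
  rw [h, MvPolynomial.aeval_def, MvPolynomial.eval, Algebra.algebraMap_self]
  rfl

private lemma natDegAeval' {k : ℕ} (p : MvPolynomial (Fin k) ℂ) (v : Fin k → ℂ) :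
    (MvPolynomial.aeval (fun j => Polynomial.C (v j) * Polynomial.X) p).natDegree
      ≤ p.totalDegree := by
  conv_lhs => rw [p.as_sum, map_sum]
  apply Polynomial.natDegree_sum_le_of_forall_le
  intro m hm
  rw [MvPolynomial.aeval_monomial]
  apply le_trans (Polynomial.natDegree_mul_le)
  have h1 : (algebraMap ℂ (Polynomial ℂ) (MvPolynomial.coeff m p)).natDegree = 0 := by
    simp [Polynomial.algebraMap_eq]
  rw [h1, zero_add]
  calc (m.prod fun j e => (Polynomial.C (v j) * Polynomial.X) ^ e).natDegree
      ≤ ∑ j ∈ m.support, ((Polynomial.C (v j) * Polynomial.X) ^ (m j)).natDegree :=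
        Polynomial.natDegree_prod_le _ _
    _ ≤ ∑ j ∈ m.support, m j := by
        apply Finset.sum_le_sum
        intro j _
        refine le_trans (Polynomial.natDegree_pow_le) ?_
        have h2 : (Polynomial.C (v j) * Polynomial.X).natDegree ≤ 1 := by
          apply le_trans (Polynomial.natDegree_mul_le)
          simp
        nlinarith [h2]
    _ ≤ p.totalDegree := MvPolynomial.le_totalDegree hm

private lemma coeffAeval' {k : ℕ} (p : MvPolynomial (Fin k) ℂ) (v : Fin k → ℂ) (D : ℕ) :
    (MvPolynomial.aeval (fun j => Polynomial.C (v j) * Polynomial.X) p).coeff D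
      = MvPolynomial.eval v (MvPolynomial.homogeneousComponent D p) := by
  conv_lhs => rw [p.as_sum, map_sum]
  rw [Polynomial.finset_sum_coeff, MvPolynomial.homogeneousComponent_apply, map_sum,
    Finset.sum_filter]
  apply Finset.sum_congr rfl
  intro m hm
  rw [MvPolynomial.aeval_monomial]
  have hprod : (m.prod fun j e => (Polynomial.C (v j) * Polynomial.X) ^ e)
      = Polynomial.C (m.prod fun j e => v j ^ e) * Polynomial.X ^ (m.degree) := by
    rw [Finsupp.prod, Finsupp.prod, Finsupp.degree]
    simp only [mul_pow, Finset.prod_mul_distrib, ← Polynomial.C_pow]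
    rw [← map_prod (Polynomial.C : ℂ →+* Polynomial ℂ) (fun a => v a ^ m a) m.support,
      Finset.prod_pow_eq_pow_sum]
    rfl
  rw [hprod, Polynomial.algebraMap_eq, ← mul_assoc, ← Polynomial.C_mul]
  simp only [Polynomial.coeff_C_mul, Polynomial.coeff_X_pow, MvPolynomial.eval_monomial,
    mul_ite, mul_one, mul_zero]
  by_cases h : m.degree = D
  · simp [h]
  · simp [h, Ne.symm h]

private lemma coeffBound' {k d : ℕ} (hd : 0 < d) (a : Fin d → MvPolynomial (Fin k) ℂ)
    (s C : ℝ)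
    (hbound : ∀ (x : Fin k → ℂ) (t : ℂ),
      t ^ d + ∑ i : Fin d, MvPolynomial.eval x (a i) * t ^ (d - 1 - i.1) = 0 →
      ‖t‖ ≤ C * (1 + ‖x‖) ^ s)
    (i : Fin d) (x : Fin k → ℂ) :
    ‖MvPolynomial.eval x (a i)‖
      ≤ (C * (1 + ‖x‖) ^ s) ^ (i.1 + 1) * (d.choose (d - 1 - i.1)) := by
  set f : Polynomial ℂ := Polynomial.X ^ d
      + ∑ j : Fin d, Polynomial.C (MvPolynomial.eval x (a j)) * Polynomial.X ^ (d - 1 - j.1)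
    with hf
  have hlt : (∑ j : Fin d, Polynomial.C (MvPolynomial.eval x (a j))
      * Polynomial.X ^ (d - 1 - j.1)).degree < ((d : ℕ) : WithBot ℕ) := by
    apply lt_of_le_of_lt (Polynomial.degree_sum_le _ _)
    rw [Finset.sup_lt_iff (by exact_mod_cast WithBot.bot_lt_coe d)]
    intro j _
    apply lt_of_le_of_lt (Polynomial.degree_C_mul_X_pow_le _ _)
    exact_mod_cast Nat.cast_lt.mpr (by omega : d - 1 - j.1 < d)
  have hmon : f.Monic := Polynomial.monic_X_pow_add hlt
  have hdegf : f.natDegree = d := by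
    have hdf : f.degree = d := by
      rw [hf, Polynomial.degree_add_eq_left_of_degree_lt (by rwa [Polynomial.degree_X_pow]),
        Polynomial.degree_X_pow]
    exact Polynomial.natDegree_eq_of_degree_eq_some hdf
  have hroots : ∀ z ∈ (Polynomial.map (RingHom.id ℂ) f).roots, ‖z‖ ≤ C * (1 + ‖x‖) ^ s := by
    intro z hz
    rw [Polynomial.map_id] at hz
    have hz0 : f.eval z = 0 := Polynomial.isRoot_of_mem_roots hz
    apply hbound x z
    have hev : z ^ d + ∑ j : Fin d, MvPolynomial.eval x (a j) * z ^ (d - 1 - j.1)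
        = f.eval z := by
      simp [hf, Polynomial.eval_finset_sum]
    rw [hev, hz0]
  have key := Polynomial.coeff_le_of_roots_le (d - 1 - i.1) hmon
    (IsAlgClosed.splits (f.map (RingHom.id ℂ))) hroots
  rw [Polynomial.map_id] at key
  have hcoeff : f.coeff (d - 1 - i.1) = MvPolynomial.eval x (a i) := by
    rw [hf, Polynomial.coeff_add, Polynomial.coeff_X_pow,
      if_neg (by omega : ¬ (d - 1 - i.1 = d)), zero_add, Polynomial.finset_sum_coeff]
    simp only [Polynomial.coeff_C_mul, Polynomial.coeff_X_pow]
    rw [Finset.sum_eq_single i]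
    · simp
    · intro j _ hj
      have hji : j.1 ≠ i.1 := Fin.val_ne_of_ne hj
      have hj2 := j.2
      have hi2 := i.2
      rw [if_neg (by omega), mul_zero]
    · intro h; exact absurd (Finset.mem_univ i) h
  rw [hcoeff, hdegf] at key
  have he : d - (d - 1 - i.1) = i.1 + 1 := by have := i.2; omega
  rwa [he] at key

/-- minimality in Strzeboński's lemma: if `s ≥ 0` and every zero
`(x,t)` of the monic polynomial `P(x,t)=t^d+a₁(x)t^{d-1}+⋯+a_d(x)` satisfies
`‖t‖ ≤ C(1+‖x‖)^s` for some `C > 0`, then `s ≥ δ(P) = max_j (deg a_j)/j`. -/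
theorem stmt_4 (k d : ℕ) (hd : 0 < d) (a : Fin d → MvPolynomial (Fin k) ℂ)
    (δ : ℝ)
    (hδ : IsGreatest {r : ℝ | ∃ i : Fin d, r = ((a i).totalDegree : ℝ) / (i.1 + 1)} δ)
    (s : ℝ) (hs : 0 ≤ s) (C : ℝ) (hC : 0 < C)
    (hbound : ∀ (x : Fin k → ℂ) (t : ℂ),
      t ^ d + ∑ i : Fin d, MvPolynomial.eval x (a i) * t ^ (d - 1 - i.1) = 0 →
      ‖t‖ ≤ C * (1 + ‖x‖) ^ s) :
    δ ≤ s := by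
  obtain ⟨⟨i, hi⟩, -⟩ := hδ
  rw [hi, div_le_iff₀ (by positivity)]
  by_contra hcon
  push_neg at hcon
  set p := a i with hp
  set D := (a i).totalDegree with hD
  set r := s * ((i.1 : ℝ) + 1) with hrdef
  have hr0 : 0 ≤ r := by positivity
  have hrD : r < (D : ℝ) := by
    rw [hrdef]
    push_cast at hcon
    linarith
  have hD1 : 0 < D := by
    rcases Nat.eq_zero_or_pos D with h | h
    · rw [h] at hrD; norm_num at hrD; linarith
    · exact h
  have hp0 : p ≠ 0 := by
    intro h
    rw [hD, ← hp, h, MvPolynomial.totalDegree_zero] at hD1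
    exact lt_irrefl _ hD1
  have hhc : MvPolynomial.homogeneousComponent D p ≠ 0 := by
    obtain ⟨m, hm, hmD⟩ := Finset.exists_mem_eq_sup p.support
      (MvPolynomial.support_nonempty.mpr hp0) (fun s => s.sum fun _ e => e)
    intro h0
    have h1 : MvPolynomial.coeff m (MvPolynomial.homogeneousComponent D p)
        = MvPolynomial.coeff m p := by
      rw [MvPolynomial.coeff_homogeneousComponent, if_pos]
      show m.degree = D
      rw [hD, ← hp, MvPolynomial.totalDegree, hmD]
      rfl
    rw [h0] at h1
    exact (MvPolynomial.mem_support_iff.mp hm) h1.symm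
  obtain ⟨v, hv⟩ : ∃ v : Fin k → ℂ,
      MvPolynomial.eval v (MvPolynomial.homogeneousComponent D p) ≠ 0 := by
    by_contra h
    push_neg at h
    exact hhc (MvPolynomial.funext fun x => by simp [h x])
  set q := MvPolynomial.aeval (fun j => Polynomial.C (v j) * Polynomial.X) p with hq
  have hqc : q.coeff D ≠ 0 := by rw [hq, coeffAeval']; exact hv
  have hqd : q.natDegree ≤ D := by rw [hq, hD, hp]; exact natDegAeval' p v
  set c0 := ‖q.coeff D‖ with hc0
  have hc0pos : 0 < c0 := norm_pos_iff.mpr hqc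
  set S := ∑ j ∈ Finset.range D, ‖q.coeff j‖ with hS
  have hS0 : 0 ≤ S := Finset.sum_nonneg fun _ _ => norm_nonneg _
  set M := (d.choose (d - 1 - i.1) : ℝ) with hM
  have hM0 : 0 < M := by
    rw [hM]
    exact_mod_cast Nat.choose_pos (by omega : d - 1 - i.1 ≤ d)
  set K := M * C ^ (i.1 + 1) * (1 + ‖v‖) ^ r with hK
  have hvnorm0 : (0:ℝ) < 1 + ‖v‖ := by positivity
  have hrpow : ∀ b : ℝ, 0 ≤ b → (b ^ s) ^ (i.1 + 1) = b ^ r := by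
    intro b hb
    rw [← Real.rpow_natCast (b ^ s) (i.1 + 1), ← Real.rpow_mul hb, hrdef]
    congr 1
    push_cast
    ring
  -- upper bound
  have hup : ∀ x : ℝ, 1 ≤ x → ‖q.eval (x : ℂ)‖ ≤ K * x ^ r := by
    intro x hx
    have hx0 : (0:ℝ) < x := lt_of_lt_of_le one_pos hx
    rw [hq, evalAeval']
    have hnorm : ‖(fun j => (x:ℂ) * v j : Fin k → ℂ)‖ = x * ‖v‖ := by
      have h : (fun j => (x:ℂ) * v j) = (x:ℂ) • v := by funext j; simp
      rw [h, norm_smul, Complex.norm_real, Real.norm_eq_abs, abs_of_pos hx0]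
    calc ‖MvPolynomial.eval (fun j => (x:ℂ) * v j) p‖
        ≤ (C * (1 + ‖(fun j => (x:ℂ) * v j : Fin k → ℂ)‖) ^ s) ^ (i.1 + 1) * M :=
          coeffBound' hd a s C hbound i _
      _ ≤ (C * ((1 + ‖v‖) * x) ^ s) ^ (i.1 + 1) * M := by
          refine mul_le_mul_of_nonneg_right (pow_le_pow_left₀ (by positivity) ?_ _) (le_of_lt hM0)
          refine mul_le_mul_of_nonneg_left ?_ (le_of_lt hC)
          refine Real.rpow_le_rpow (by positivity) ?_ hs
          rw [hnorm]
          nlinarith [norm_nonneg v]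
      _ = K * x ^ r := by
          rw [mul_pow, Real.mul_rpow (le_of_lt hvnorm0) (le_of_lt hx0), mul_pow,
            hrpow _ (le_of_lt hvnorm0), hrpow _ (le_of_lt hx0), hK]
          ring
  -- lower bound
  have hlow : ∀ x : ℝ, 1 ≤ x → c0 * x ^ D - S * x ^ (D - 1) ≤ ‖q.eval (x:ℂ)‖ := by
    intro x hx
    have hx0 : (0:ℝ) ≤ x := le_trans zero_le_one hx
    have hev : q.eval (x:ℂ)
        = (∑ j ∈ Finset.range D, q.coeff j * (x:ℂ) ^ j) + q.coeff D * (x:ℂ) ^ D := by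
      rw [Polynomial.eval_eq_sum_range' (lt_of_le_of_lt hqd (Nat.lt_succ_self D)),
        Finset.sum_range_succ]
    rw [hev]
    have h1 : ‖q.coeff D * (x:ℂ) ^ D‖ = c0 * x ^ D := by
      rw [norm_mul, norm_pow, Complex.norm_real, Real.norm_eq_abs, abs_of_nonneg hx0, hc0]
    have h2 : ‖∑ j ∈ Finset.range D, q.coeff j * (x:ℂ) ^ j‖ ≤ S * x ^ (D - 1) := by
      refine le_trans (norm_sum_le _ _) ?_
      rw [hS, Finset.sum_mul]
      apply Finset.sum_le_sum
      intro j hj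
      rw [norm_mul, norm_pow, Complex.norm_real, Real.norm_eq_abs, abs_of_nonneg hx0]
      have hjD : j ≤ D - 1 := by
        have := Finset.mem_range.mp hj; omega
      gcongr
    have h3 : ‖q.coeff D * (x:ℂ) ^ D‖ - ‖∑ j ∈ Finset.range D, q.coeff j * (x:ℂ) ^ j‖
        ≤ ‖(∑ j ∈ Finset.range D, q.coeff j * (x:ℂ) ^ j) + q.coeff D * (x:ℂ) ^ D‖ := by
      have h4 := norm_sub_norm_le (q.coeff D * (x:ℂ) ^ D)
        (-(∑ j ∈ Finset.range D, q.coeff j * (x:ℂ) ^ j))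
      rw [norm_neg, sub_neg_eq_add, add_comm] at h4
      exact h4
    rw [h1] at h3
    linarith
  -- pick a large x
  have hDr : (0:ℝ) < (D : ℝ) - r := by linarith
  obtain ⟨x, hx1, hx2, hx3⟩ : ∃ x : ℝ, 1 ≤ x ∧ 2 * S / c0 ≤ x ∧
      2 * K / c0 < x ^ ((D : ℝ) - r) := by
    have h3 := (tendsto_rpow_atTop hDr).eventually_gt_atTop (2 * K / c0)
    have h1 := eventually_ge_atTop (1:ℝ)
    have h2 := eventually_ge_atTop (2 * S / c0)
    obtain ⟨x, hx⟩ := (h1.and (h2.and h3)).exists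
    exact ⟨x, hx.1, hx.2.1, hx.2.2⟩
  have hx0 : (0:ℝ) < x := lt_of_lt_of_le one_pos hx1
  have hA := hup x hx1
  have hB := hlow x hx1
  have hxpow0 : (0:ℝ) < x ^ (D - 1) := pow_pos hx0 _
  have hSx : S * x ^ (D - 1) ≤ c0 / 2 * x ^ D := by
    have hxD : x ^ D = x * x ^ (D - 1) := by
      conv_lhs => rw [show D = 1 + (D - 1) by omega]
      rw [pow_add, pow_one]
    rw [hxD]
    have hs2 : 2 * S ≤ c0 * x := by
      rw [div_le_iff₀ hc0pos] at hx2
      linarith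
    nlinarith
  have hKx : K * x ^ r < c0 / 2 * x ^ D := by
    have hxr : (0:ℝ) < x ^ r := Real.rpow_pos_of_pos hx0 r
    have hmul := mul_lt_mul_of_pos_right hx3 hxr
    rw [← Real.rpow_add hx0, sub_add_cancel, Real.rpow_natCast] at hmul
    have h5 := mul_lt_mul_of_pos_left hmul (half_pos hc0pos)
    have h6 : c0 / 2 * (2 * K / c0 * x ^ r) = K * x ^ r := by
      field_simp
    rw [h6] at h5
    exact h5
  linarith
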